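/- There exists a bounded Borel set A ⊂ ℝ³ such that A + B̄₁(0) (the Minkowski sum of A with the closed unit ball) is not a Borel set. Consequently, for u = χ_A, ε = 1, δ = 1/3, no Borel measurable selection σ : ℝ³ → ℝ³ with σ(x) ∈ B̄₁(x) and u(σ(x)) ≥ sup_{B̄₁(x)} u − δ can be constructed via the set A + B̄₁(0); in particular the selection lemma with closed balls can fail. -/

import Mathlib

open MeasureTheory Metric Set Pointwise

namespace ESAux
open MeasureTheory Set
namespace ES
abbrev X := ℕ → ℕ

/-- the clopen cylinder coded by a list -/
def cylL (l : List ℕ) : Set X := PiNat.cylinder (fun i => l.getD i 0) l.length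

lemma isOpen_cylL (l : List ℕ) : IsOpen (cylL l) := PiNat.isOpen_cylinder _ _ _

lemma exists_cylL (u : Set X) (hu : IsOpen u) {x : X} (hx : x ∈ u) :
    ∃ l, x ∈ cylL l ∧ cylL l ⊆ u := by
  obtain ⟨v, ⟨y, n, rfl⟩, hxv, hvu⟩ :=
    (PiNat.isTopologicalBasis_cylinders (fun _ : ℕ => ℕ)).exists_subset_of_mem_open hx hu
  refine ⟨List.ofFn fun i : Fin n => y i, ?_, ?_⟩
  · rw [cylL, PiNat.mem_cylinder_iff]
    intro i hi
    have hi' : i < n := by simpa using hi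
    rw [List.getD_eq_getElem _ _ (by simpa using hi'), List.getElem_ofFn]
    exact PiNat.mem_cylinder_iff.1 hxv i hi'
  · intro z hz
    apply hvu
    rw [PiNat.mem_cylinder_iff]
    intro i hi
    have := (PiNat.mem_cylinder_iff.1 hz) i (by simpa [cylL] using hi)
    rwa [List.getD_eq_getElem _ _ (by simpa using hi), List.getElem_ofFn] at this

noncomputable def dec : ℕ → List ℕ × List ℕ := Denumerable.ofNat _

def V (n : ℕ) : Set (X × X) := cylL (dec n).1 ×ˢ cylL (dec n).2

lemma isOpen_V (n : ℕ) : IsOpen (V n) := (isOpen_cylL _).prod (isOpen_cylL _)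

lemma exists_V {W : Set (X × X)} (hW : IsOpen W) {p : X × X} (hp : p ∈ W) :
    ∃ n, p ∈ V n ∧ V n ⊆ W := by
  obtain ⟨u, v, hu, hv, hpu, hpv, huv⟩ := isOpen_prod_iff.1 hW p.1 p.2 hp
  obtain ⟨l, hl, hlu⟩ := exists_cylL u hu hpu
  obtain ⟨m, hm, hmv⟩ := exists_cylL v hv hpv
  refine ⟨Encodable.encode (l, m), ?_, ?_⟩
  · simp only [V, dec, Denumerable.ofNat_encode]
    exact ⟨hl, hm⟩
  · simp only [V, dec, Denumerable.ofNat_encode]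
    exact fun q hq => huv ⟨hlu hq.1, hmv hq.2⟩

def F2 : Set (X × (X × X)) := {p | ∀ n, p.1 n ≠ 0 → p.2 ∉ V n}

lemma isClosed_F2 : IsClosed F2 := by
  have : F2 = ⋂ n, ({p : X × (X × X) | p.1 n = 0} ∪ {p | p.2 ∈ V n}ᶜ) := by
    ext p
    simp only [F2, mem_setOf_eq, mem_iInter, mem_union, mem_compl_iff]
    refine forall_congr' fun n => ?_
    tauto
  rw [this]
  refine isClosed_iInter fun n => IsClosed.union ?_ ?_
  · exact isClosed_eq ((continuous_apply n).comp continuous_fst) continuous_const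
  · exact (((isOpen_V n).preimage continuous_snd).isClosed_compl)

lemma universal (C : Set (X × X)) (hC : IsClosed C) :
    ∃ c : X, ∀ p, ((c, p) ∈ F2 ↔ p ∈ C) := by
  classical
  refine ⟨fun n => if V n ∩ C = ∅ then 1 else 0, fun p => ⟨?_, ?_⟩⟩
  · intro h
    by_contra hp
    obtain ⟨n, hn, hnsub⟩ := exists_V hC.isOpen_compl hp
    have hdisj : V n ∩ C = ∅ := by
      rw [eq_empty_iff_forall_notMem]
      exact fun q hq => hnsub hq.1 hq.2
    exact h n (by simp [hdisj]) hn
  · intro hp n hn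
    by_cases hd : V n ∩ C = ∅
    · exact fun hv => (eq_empty_iff_forall_notMem.1 hd p) ⟨hv, hp⟩
    · simp [hd] at hn

def D : Set X := {x | ∃ y : X, (x, (x, y)) ∈ F2}

lemma D_proj : ∃ C : Set (X × X), IsClosed C ∧ Prod.fst '' C = D := by
  refine ⟨(fun q : X × X => (q.1, (q.1, q.2))) ⁻¹' F2,
    isClosed_F2.preimage (by fun_prop), ?_⟩
  ext x
  constructor
  · rintro ⟨q, hq, rfl⟩; exact ⟨q.2, hq⟩
  · rintro ⟨y, hy⟩; exact ⟨(x, y), hy, rfl⟩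

lemma not_measurableSet_D : ¬ MeasurableSet D := by
  intro hD
  have hA : AnalyticSet Dᶜ := hD.compl.analyticSet
  obtain ⟨C, hC, hCD⟩ : ∃ C : Set (X × X), IsClosed C ∧ Prod.fst '' C = Dᶜ := by
    rw [AnalyticSet] at hA
    obtain h | ⟨f, hf, hrange⟩ := hA
    · exact ⟨∅, isClosed_empty, by simp [h]⟩
    · refine ⟨{q : X × X | q.1 = f q.2}, isClosed_eq continuous_fst (hf.comp continuous_snd), ?_⟩
      rw [← hrange]
      ext x
      constructor
      · rintro ⟨q, hq, rfl⟩; exact ⟨q.2, hq.symm⟩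
      · rintro ⟨y, hy⟩; exact ⟨(x, y), hy.symm, rfl⟩
  obtain ⟨c, hc⟩ := universal C hC
  have : c ∈ D ↔ c ∈ Dᶜ := by
    constructor
    · rintro ⟨y, hy⟩
      rw [← hCD]
      exact ⟨(c, y), (hc _).1 hy, rfl⟩
    · intro h
      rw [← hCD] at h
      obtain ⟨⟨q1, q2⟩, hq, hq1⟩ := h
      dsimp at hq1
      subst hq1
      exact ⟨q2, (hc _).2 hq⟩
  rw [mem_compl_iff] at this
  exact iff_not_self this

end ES
open MeasureTheory Metric Set Pointwise
namespace ES

lemma hX : ¬ Countable X := by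
  intro h
  haveI : Nonempty X := ⟨fun _ => 0⟩
  obtain ⟨f, hf⟩ := exists_surjective_nat X
  obtain ⟨n, hn⟩ := hf (fun n => f n n + 1)
  exact Nat.succ_ne_self (f n n) (congrFun hn n).symm

lemma hIoo : ¬ Countable ↥(Ioo (0:ℝ) 1) := by
  intro h
  have h2 : (Cardinal.mk ↥(Ioo (0:ℝ) 1)) ≤ Cardinal.aleph0 := Cardinal.mk_le_aleph0_iff.2 h
  rw [Cardinal.mk_Ioo_real zero_lt_one] at h2
  exact absurd h2 (Cardinal.aleph0_lt_continuum).not_ge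

lemma exists_psi : ∃ ψ : X → ℝ, Measurable ψ ∧ Function.Injective ψ ∧ ∀ x, ψ x ∈ Ioo (0:ℝ) 1 := by
  haveI : StandardBorelSpace ↥(Ioo (0:ℝ) 1) := measurableSet_Ioo.standardBorel
  have e := PolishSpace.measurableEquivOfNotCountable hX hIoo
  exact ⟨fun x => (e x : ℝ), measurable_subtype_coe.comp e.measurable,
    Subtype.val_injective.comp e.injective, fun x => (e x).2⟩

abbrev E3 := EuclideanSpace ℝ (Fin 3)

noncomputable def mk3 (a b c : ℝ) : E3 := (WithLp.equiv 2 (Fin 3 → ℝ)).symm ![a, b, c]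

lemma mk3_zero_eq : mk3 0 0 0 = (0 : E3) := by
  ext i; fin_cases i <;> rfl

lemma dist_mk3 (a b c d e f : ℝ) :
    dist (mk3 a b c) (mk3 d e f) = Real.sqrt ((a-d)^2 + (b-e)^2 + (c-f)^2) := by
  rw [EuclideanSpace.dist_eq]
  congr 1
  rw [Fin.sum_univ_three]
  show dist a d ^ 2 + dist b e ^ 2 + dist c f ^ 2 = _
  rw [Real.dist_eq, Real.dist_eq, Real.dist_eq, sq_abs, sq_abs, sq_abs]

lemma cont_mk3 : Continuous fun s : ℝ × ℝ => mk3 s.1 (Real.cos s.2) (Real.sin s.2) := by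
  unfold mk3
  apply (PiLp.continuous_toLp (p := 2) (β := fun _ : Fin 3 => ℝ)).comp
  apply continuous_pi
  intro i
  fin_cases i <;> simp <;> fun_prop

lemma cont_iota : Continuous fun t : ℝ => mk3 t 0 0 := by
  unfold mk3
  apply (PiLp.continuous_toLp (p := 2) (β := fun _ : Fin 3 => ℝ)).comp
  apply continuous_pi
  intro i
  fin_cases i <;> simp <;> fun_prop

end ES

namespace ES

lemma mk3_inj {a b c d e f : ℝ} (h : mk3 a b c = mk3 d e f) : a = d ∧ b = e ∧ c = f := by
  have h' : ![a, b, c] = ![d, e, f] := (WithLp.equiv 2 (Fin 3 → ℝ)).symm.injective h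
  exact ⟨by simpa using congrFun h' 0, by simpa using congrFun h' 1, by simpa using congrFun h' 2⟩

lemma angle_inj {a b : ℝ} (ha : a ∈ Ioo (0:ℝ) 1) (hb : b ∈ Ioo (0:ℝ) 1)
    (hcos : Real.cos a = Real.cos b) (hsin : Real.sin a = Real.sin b) : a = b := by
  have hs : Real.sin (a - b) = 0 := by rw [Real.sin_sub, hcos, hsin]; ring
  have hpi := Real.pi_gt_three
  obtain ⟨ha1, ha2⟩ := ha
  obtain ⟨hb1, hb2⟩ := hb
  rw [Real.sin_eq_zero_iff_of_lt_of_lt (by linarith) (by linarith)] at hs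
  linarith

end ES


end ESAux
open ESAux

/-- There is a bounded Borel set `A ⊂ ℝ³` whose Minkowski sum with the closed
unit ball is not Borel; consequently there is no Borel `(1/3)`-optimal
sup-selection for `χ_A` with the closed-ball constraint. -/
theorem exists_borel_set_closedBall_sum_not_borel :
    ∃ A : Set (EuclideanSpace ℝ (Fin 3)),
      MeasurableSet A ∧ Bornology.IsBounded A ∧
      ¬ MeasurableSet (A + closedBall (0 : EuclideanSpace ℝ (Fin 3)) 1) ∧
      ¬ ∃ σ : EuclideanSpace ℝ (Fin 3) → EuclideanSpace ℝ (Fin 3),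
          Measurable σ ∧ ∀ x, σ x ∈ closedBall x 1 ∧
            sSup ((A.indicator (fun _ => (1:ℝ))) '' closedBall x 1) - 1/3
              ≤ A.indicator (fun _ => (1:ℝ)) (σ x) := by
  classical
  obtain ⟨ψ, ψm, ψi, ψmem⟩ := ES.exists_psi
  obtain ⟨C0, hC0c, hC0p⟩ := ES.D_proj
  set g : (ES.X × ES.X) → ES.E3 :=
    fun q => ES.mk3 (ψ q.1) (Real.cos (ψ q.2)) (Real.sin (ψ q.2)) with hg
  have hg_meas : Measurable g := by
    have hcomp : g = (fun s : ℝ × ℝ => ES.mk3 s.1 (Real.cos s.2) (Real.sin s.2)) ∘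
        fun q : ES.X × ES.X => (ψ q.1, ψ q.2) := rfl
    rw [hcomp]
    exact ES.cont_mk3.measurable.comp ((ψm.comp measurable_fst).prodMk (ψm.comp measurable_snd))
  have hg_inj : Function.Injective g := by
    intro q q' h
    simp only [hg] at h
    obtain ⟨h1, h2, h3⟩ := ES.mk3_inj h
    have e1 : q.1 = q'.1 := ψi h1
    have e2 : q.2 = q'.2 := ψi (ES.angle_inj (ψmem q.2) (ψmem q'.2) h2 h3)
    exact Prod.ext e1 e2
  have hg_emb : MeasurableEmbedding g := hg_meas.measurableEmbedding hg_inj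
  set A : Set ES.E3 := g '' C0 with hA_def
  have hA : MeasurableSet A := hg_emb.measurableSet_image' hC0c.measurableSet
  have hAb : Bornology.IsBounded A := by
    apply (isBounded_closedBall (x := (0:ES.E3)) (r := 2)).subset
    rintro _ ⟨q, -, rfl⟩
    rw [mem_closedBall]
    simp only [hg]
    rw [← ES.mk3_zero_eq, ES.dist_mk3]
    have h1 := ψmem q.1
    have hle4 : (ψ q.1 - 0)^2 + (Real.cos (ψ q.2) - 0)^2 + (Real.sin (ψ q.2) - 0)^2 ≤ 4 := by
      nlinarith [h1.1, h1.2, Real.sin_sq_add_cos_sq (ψ q.2)]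
    calc Real.sqrt ((ψ q.1 - 0)^2 + (Real.cos (ψ q.2) - 0)^2 + (Real.sin (ψ q.2) - 0)^2)
        ≤ Real.sqrt 4 := Real.sqrt_le_sqrt hle4
      _ = 2 := by rw [show (4:ℝ) = 2^2 by norm_num, Real.sqrt_sq (by norm_num)]
  have hkey : ∀ t : ℝ, (ES.mk3 t 0 0 ∈ A + closedBall (0:ES.E3) 1 ↔ t ∈ ψ '' ES.D) := by
    intro t
    constructor
    · intro ht
      obtain ⟨a, haA, b, hb, hab⟩ := mem_add.1 ht
      obtain ⟨q, hq, rfl⟩ := haA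
      have hb' : ‖b‖ ≤ 1 := mem_closedBall_zero_iff.1 hb
      have hbeq : b = ES.mk3 t 0 0 - g q := by rw [← hab]; abel
      have hd : dist (ES.mk3 t 0 0) (g q) ≤ 1 := by
        rw [dist_eq_norm, ← hbeq]; exact hb'
      simp only [hg] at hd
      rw [ES.dist_mk3] at hd
      set S := (t - ψ q.1)^2 + (0 - Real.cos (ψ q.2))^2 + (0 - Real.sin (ψ q.2))^2 with hS
      have hnn : (0:ℝ) ≤ S := by positivity
      have hle : S ≤ 1 := by
        nlinarith [Real.sq_sqrt hnn, Real.sqrt_nonneg S]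
      have ht0 : t = ψ q.1 := by
        have htrig := Real.sin_sq_add_cos_sq (ψ q.2)
        have h0 : (t - ψ q.1)^2 ≤ 0 := by rw [hS] at hle; nlinarith
        have h0' : (t - ψ q.1)^2 = 0 := le_antisymm h0 (sq_nonneg _)
        have := pow_eq_zero_iff (n := 2) (by norm_num) |>.1 h0'
        linarith [sub_eq_zero.1 this]
      have hD : q.1 ∈ ES.D := by rw [← hC0p]; exact ⟨q, hq, rfl⟩
      exact ⟨q.1, hD, ht0.symm⟩
    · rintro ⟨x, hxD, rfl⟩
      rw [← hC0p] at hxD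
      obtain ⟨q, hq, hq1⟩ := hxD
      refine mem_add.2 ⟨g q, ⟨q, hq, rfl⟩, ES.mk3 (ψ x) 0 0 - g q, ?_, by abel⟩
      have hdist : dist (ES.mk3 (ψ x) 0 0) (g q) = 1 := by
        simp only [hg]
        rw [ES.dist_mk3, hq1]
        have h1 : (ψ x - ψ x)^2 + (0 - Real.cos (ψ q.2))^2 + (0 - Real.sin (ψ q.2))^2 = 1 := by
          linear_combination Real.sin_sq_add_cos_sq (ψ q.2)
        rw [h1, Real.sqrt_one]
      rw [mem_closedBall_zero_iff, ← dist_eq_norm, hdist]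
  have hnotmeas : ¬ MeasurableSet (A + closedBall (0:ES.E3) 1) := by
    intro h
    have h2 : MeasurableSet ((fun t : ℝ => ES.mk3 t 0 0) ⁻¹' (A + closedBall (0:ES.E3) 1)) :=
      h.preimage ES.cont_iota.measurable
    have h3 : (fun t : ℝ => ES.mk3 t 0 0) ⁻¹' (A + closedBall (0:ES.E3) 1) = ψ '' ES.D := by
      ext t; exact hkey t
    rw [h3] at h2
    have h4 : MeasurableSet (ψ ⁻¹' (ψ '' ES.D)) := ψm h2
    rw [preimage_image_eq _ ψi] at h4
    exact ES.not_measurableSet_D h4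
  refine ⟨A, hA, hAb, hnotmeas, ?_⟩
  rintro ⟨σ, σm, hσ⟩
  apply hnotmeas
  have hset : A + closedBall (0:ES.E3) 1 = σ ⁻¹' A := by
    ext x
    constructor
    · intro hx
      obtain ⟨a, haA, b, hb, hab⟩ := mem_add.1 hx
      have hmem1 : (1:ℝ) ∈ (A.indicator (fun _ => (1:ℝ))) '' closedBall x 1 := by
        refine ⟨a, ?_, by rw [indicator_of_mem haA]⟩
        rw [mem_closedBall, dist_eq_norm]
        have hax : a - x = -b := by rw [← hab]; abel
        rw [hax, norm_neg]
        exact mem_closedBall_zero_iff.1 hb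
      have hbdd : BddAbove ((A.indicator fun _ => (1:ℝ)) '' closedBall x 1) := by
        refine ⟨1, ?_⟩
        rintro r ⟨y, -, rfl⟩
        by_cases hy : y ∈ A <;> simp [indicator_of_mem, indicator_of_notMem, hy]
      have hsup := le_csSup hbdd hmem1
      have h2 := (hσ x).2
      show σ x ∈ A
      by_contra hnot
      rw [indicator_of_notMem hnot] at h2
      linarith
    · intro hx
      have hc := mem_closedBall.1 (hσ x).1
      refine mem_add.2 ⟨σ x, hx, x - σ x, ?_, by abel⟩
      rw [mem_closedBall_zero_iff, ← dist_eq_norm, dist_comm]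
      exact hc
  rw [hset]
  exact σm hA
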